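/- arXiv:2510.23476 — 4 statements merged into one kernel-verified Lean document; each statement's English description precedes it below -/
import Mathlib

section
/- Let b_t be a sequence in ℝ with b_1 ∈ [0,1], updated by b_{t+1} = b_t + η·(1{s_t > b_t} − ε) where s_t ∈ [0,1], η > 0, and ε ∈ [0,1]. Then for all t > 1, b_t ∈ [−ηε, 1 + η(1−ε)]. -/
/-- Online threshold update boundedness: with `b 1 ∈ [0,1]`, scores in `[0,1]`,
`η > 0`, `ε ∈ [0,1]`, and update `b (t+1) = b t + η (1{s t > b t} − ε)`,
every `b t` with `t > 1` lies in `[−ηε, 1 + η(1−ε)]`. -/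
theorem online_threshold_bounded (η ε : ℝ) (b s : ℕ → ℝ)
    (hη : 0 < η) (hε : ε ∈ Set.Icc (0:ℝ) 1)
    (hb1 : b 1 ∈ Set.Icc (0:ℝ) 1)
    (hs : ∀ t, s t ∈ Set.Icc (0:ℝ) 1)
    (hupd : ∀ t ≥ 1, b (t + 1) = b t + η * ((if s t > b t then (1:ℝ) else 0) - ε)) :
    ∀ t > 1, b t ∈ Set.Icc (-(η * ε)) (1 + η * (1 - ε)) := by
  obtain ⟨hε0, hε1⟩ := hε
  have key : ∀ t, 1 ≤ t → b t ∈ Set.Icc (-(η * ε)) (1 + η * (1 - ε)) := by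
    intro t ht
    induction t, ht using Nat.le_induction with
    | base =>
      constructor
      · have : 0 ≤ η * ε := mul_nonneg hη.le hε0
        linarith [hb1.1]
      · have : 0 ≤ η * (1 - ε) := mul_nonneg hη.le (by linarith)
        linarith [hb1.2]
    | succ n hn ih =>
      obtain ⟨ihl, ihr⟩ := ih
      rw [hupd n hn]
      by_cases h : s n > b n
      · simp only [if_pos h]
        obtain ⟨_, hs1⟩ := hs n
        constructor
        · have : 0 ≤ η * (1 - ε) := mul_nonneg hη.le (by linarith)
          nlinarith
        · nlinarith
      · simp only [if_neg h]
        push_neg at h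
        obtain ⟨hs0, _⟩ := hs n
        constructor
        · nlinarith
        · have : 0 ≤ η * ε := mul_nonneg hη.le hε0
          nlinarith
  intro t ht
  exact key t (le_of_lt ht)
end

section
/- Let S_1,…,S_n, S_{n+1} be exchangeable real-valued random variables, and let Q = Quantile_{1−ε}({S_1,…,S_n} ∪ {∞}) denote the ⌈(1−ε)(n+1)⌉-th smallest value of the augmented multiset. Then P(S_{n+1} ≤ Q) ≥ 1 − ε. -/
open MeasureTheory
open scoped NNReal ENNReal

/-- The `k`-th smallest element of a list of extended reals (`⊤` if out of range). -/
noncomputable def orderStat (l : List EReal) (k : ℕ) : EReal :=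
  (l.mergeSort (fun a b => decide (a ≤ b))).getD (k - 1) ⊤

private lemma getD_le_of_forall_le {c : EReal} {s : List EReal} (h : ∀ b ∈ s, c ≤ b)
    (j : ℕ) : c ≤ s.getD j ⊤ := by
  rcases lt_or_ge j s.length with hj | hj
  · rw [List.getD_eq_getElem _ _ hj]
    exact h _ (List.getElem_mem hj)
  · rw [List.getD_eq_default _ _ hj]
    exact le_top

private lemma sorted_le_getD_iff (t : EReal) :
    ∀ (s : List EReal), s.Pairwise (· ≤ ·) → ∀ k : ℕ, 0 < k →
      (t ≤ s.getD (k - 1) ⊤ ↔ s.countP (fun a => decide (a < t)) < k)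
  | [], _, k, hk => by simp [hk]
  | a :: s, hs, k, hk => by
    rw [List.pairwise_cons] at hs
    obtain ⟨ha, hs⟩ := hs
    obtain ⟨m, rfl⟩ : ∃ m, k = m + 1 := ⟨k - 1, (Nat.succ_pred_eq_of_pos hk).symm⟩
    by_cases hat : a < t
    · cases m with
      | zero =>
        simp only [Nat.add_sub_cancel, List.getD_cons_zero, List.countP_cons]
        refine iff_of_false (not_le.mpr hat) ?_
        simp [hat]
      | succ j =>
        have ih := sorted_le_getD_iff t s hs (j + 1) (Nat.succ_pos j)
        simp only [Nat.add_sub_cancel] at ih ⊢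
        rw [List.getD_cons_succ, ih, List.countP_cons,
          if_pos (by simpa using hat)]
        omega
    · have hta : t ≤ a := le_of_not_gt hat
      refine iff_of_true ?_ ?_
      · exact getD_le_of_forall_le (fun b hb => by
          rcases List.mem_cons.mp hb with rfl | hb
          · exact hta
          · exact hta.trans (ha b hb)) _
      · have h0 : (a :: s).countP (fun a => decide (a < t)) = 0 := by
          rw [List.countP_eq_zero]
          intro b hb
          rcases List.mem_cons.mp hb with rfl | hb
          · simpa using hat
          · simp only [decide_eq_true_eq]
            exact not_lt.mpr (hta.trans (ha b hb))
        omega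

private lemma le_orderStat_iff (l : List EReal) (t : EReal) (k : ℕ) (hk : 0 < k) :
    t ≤ orderStat l k ↔ l.countP (fun a => decide (a < t)) < k := by
  unfold orderStat
  rw [sorted_le_getD_iff t _ (List.pairwise_mergeSort' (· ≤ ·) l) k hk,
    (List.mergeSort_perm l _).countP_eq]

private lemma countP_ofFn : ∀ (n : ℕ) (f : Fin n → EReal) (p : EReal → Bool),
    (List.ofFn f).countP p = ∑ i, if p (f i) then 1 else 0
  | 0, f, p => by simp
  | (n + 1), f, p => by
    rw [List.ofFn_succ, List.countP_cons, countP_ofFn n _ p, Fin.sum_univ_succ]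
    exact Nat.add_comm _ _

private lemma card_filter_perm {ι : Type*} [Fintype ι] [DecidableEq ι]
    (σ : Equiv.Perm ι) (p : ι → Prop) [DecidablePred p] :
    (Finset.univ.filter fun i => p (σ i)).card = (Finset.univ.filter p).card := by
  have h : (Finset.univ.filter fun i => p (σ i))
      = (Finset.univ.filter p).map (σ.symm : ι ≃ ι).toEmbedding := by
    ext a
    simp [Finset.mem_map_equiv]
  rw [h, Finset.card_map]

private lemma card_rank_lt {n k : ℕ} (hk : k ≤ n + 1) (x : Fin (n + 1) → ℝ) :
    k ≤ (Finset.univ.filter fun j =>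
      (Finset.univ.filter fun i => x i < x j).card < k).card := by
  classical
  set τ := Tuple.sort x with hτ
  have hmono := Tuple.monotone_sort x
  have hmem : ∀ m : Fin (n + 1), (m : ℕ) < k →
      (Finset.univ.filter fun i => x i < x (τ m)).card < k := by
    intro m hm
    have hcard : (Finset.univ.filter fun i => x i < x (τ m)).card
        = (Finset.univ.filter fun i => x (τ i) < x (τ m)).card :=
      (card_filter_perm τ (fun i => x i < x (τ m))).symm
    rw [hcard]
    have hsub : (Finset.univ.filter fun i => x (τ i) < x (τ m)) ⊆ Finset.Iio m := by
      intro i hi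
      simp only [Finset.mem_filter, Finset.mem_univ, true_and] at hi
      rw [Finset.mem_Iio]
      by_contra h
      exact absurd (hmono (not_lt.mp h)) (not_le.mpr hi)
    calc (Finset.univ.filter fun i => x (τ i) < x (τ m)).card
        ≤ (Finset.Iio m).card := Finset.card_le_card hsub
      _ = (m : ℕ) := Fin.card_Iio m
      _ < k := hm
  have hinj := Finset.card_le_card_of_injOn
    (f := fun m : ℕ => τ ⟨min m n, by omega⟩)
    (s := Finset.range k)
    (t := Finset.univ.filter fun j =>
      (Finset.univ.filter fun i => x i < x j).card < k)
    (fun m hm => by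
      simp only [Finset.mem_coe, Finset.mem_range] at hm
      simp only [Finset.mem_coe, Finset.mem_filter, Finset.mem_univ, true_and]
      exact hmem ⟨min m n, by omega⟩ (by simp only []; omega))
    (fun a ha b hb h => by
      simp only [Finset.mem_range, Finset.coe_range, Set.mem_Iio] at ha hb
      have h2 : (⟨min a n, by omega⟩ : Fin (n + 1)) = ⟨min b n, by omega⟩ :=
        τ.injective h
      have h3 : min a n = min b n := congrArg Fin.val h2
      omega)
  simpa using hinj

/-- Split-conformal calibration lower bound: if `S 0, …, S n` are exchangeable
real random variables and `Q` is the `⌈(1−ε)(n+1)⌉`-th smallest value of the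
first `n` scores augmented with `∞`, then `P(S_{n+1} ≤ Q) ≥ 1 − ε`. -/
theorem conformal_quantile_coverage
    {Ω : Type*} [MeasurableSpace Ω] (P : Measure Ω) [IsProbabilityMeasure P]
    (n : ℕ) (S : Fin (n + 1) → Ω → ℝ) (hmeas : ∀ i, Measurable (S i))
    (hexch : ∀ σ : Equiv.Perm (Fin (n + 1)),
      Measure.map (fun ω => fun i => S (σ i) ω) P
        = Measure.map (fun ω => fun i => S i ω) P)
    (ε : ℝ) (hε0 : 0 < ε) (hε1 : ε < 1) :
    ENNReal.ofReal (1 - ε) ≤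
      P {ω | (S (Fin.last n) ω : EReal) ≤
          orderStat
            ((List.ofFn fun i : Fin n => ((S i.castSucc ω : ℝ) : EReal)) ++ [⊤])
            (⌈(1 - ε) * (n + 1)⌉.toNat)} := by
  classical
  set k : ℕ := (⌈(1 - ε) * (n + 1)⌉).toNat with hkdef
  have hx : (0 : ℝ) < (1 - ε) * (n + 1) := by
    have hn : (0 : ℝ) < (n : ℝ) + 1 := by positivity
    nlinarith
  have hceil_pos : 0 < ⌈(1 - ε) * (n + 1)⌉ := Int.ceil_pos.mpr hx
  have hk1 : 0 < k := by simp only [hkdef]; omega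
  have hkn : k ≤ n + 1 := by
    have h1 : ⌈(1 - ε) * (n + 1)⌉ ≤ (n + 1 : ℤ) := by
      rw [Int.ceil_le]
      push_cast
      nlinarith
    omega
  have hkr : (1 - ε) * (n + 1) ≤ (k : ℝ) := by
    have h1 := Int.le_ceil ((1 - ε) * (n + 1))
    have h2 : ((⌈(1 - ε) * (n + 1)⌉ : ℤ) : ℝ) = (k : ℝ) := by
      rw [hkdef]
      exact_mod_cast congrArg (fun z : ℤ => (z : ℝ))
        (Int.toNat_of_nonneg hceil_pos.le).symm
    linarith [h2 ▸ h1]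
  set N : Fin (n + 1) → Ω → ℕ :=
    fun j ω => (Finset.univ.filter fun i => S i ω < S j ω).card with hN
  set E : Fin (n + 1) → Set Ω := fun j => {ω | N j ω < k} with hE
  -- identify the target set with E (Fin.last n)
  have hset : {ω | (S (Fin.last n) ω : EReal) ≤
      orderStat
        ((List.ofFn fun i : Fin n => ((S i.castSucc ω : ℝ) : EReal)) ++ [⊤]) k}
      = E (Fin.last n) := by
    ext ω
    simp only [Set.mem_setOf_eq, hE, hN]
    rw [le_orderStat_iff _ _ k hk1, List.countP_append, countP_ofFn]
    have h1 : (([⊤] : List EReal).countP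
        fun a => decide (a < (S (Fin.last n) ω : EReal))) = 0 := by
      simp
    rw [h1, Nat.add_zero]
    have h2 : (∑ i : Fin n,
        if (decide ((S i.castSucc ω : EReal) < (S (Fin.last n) ω : EReal)) : Bool)
        then 1 else 0)
        = (Finset.univ.filter fun i => S i ω < S (Fin.last n) ω).card := by
      rw [Finset.card_filter, Fin.sum_univ_castSucc]
      simp [EReal.coe_lt_coe_iff]
    rw [h2]
  rw [hset]
  -- measurability
  have hNmeas : ∀ j, Measurable (N j) := by
    intro j
    simp only [hN, Finset.card_filter]
    exact Finset.measurable_sum _ fun i _ =>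
      Measurable.ite (measurableSet_lt (hmeas i) (hmeas j))
        measurable_const measurable_const
  have hEmeas : ∀ j, MeasurableSet (E j) := fun j =>
    (hNmeas j) (MeasurableSet.of_discrete (s := Set.Iio k))
  have hT : Measurable (fun ω => fun i => S i ω) :=
    measurable_pi_lambda _ fun i => hmeas i
  have hA : ∀ j : Fin (n + 1), MeasurableSet {x : Fin (n + 1) → ℝ |
      (Finset.univ.filter fun i => x i < x j).card < k} := by
    intro j
    have hc : Measurable (fun x : Fin (n + 1) → ℝ =>
        (Finset.univ.filter fun i => x i < x j).card) := by
      simp only [Finset.card_filter]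
      exact Finset.measurable_sum _ fun i _ =>
        Measurable.ite (measurableSet_lt (measurable_pi_apply i) (measurable_pi_apply j))
          measurable_const measurable_const
    exact hc (MeasurableSet.of_discrete (s := Set.Iio k))
  -- exchangeability: all events have the same probability
  have hPeq : ∀ j : Fin (n + 1), P (E j) = P (E (Fin.last n)) := by
    intro j
    set σ := Equiv.swap j (Fin.last n) with hσ
    have hσmeas : Measurable (fun ω => fun i => S (σ i) ω) :=
      measurable_pi_lambda _ fun i => hmeas _
    have h1 : (Measure.map (fun ω => fun i => S (σ i) ω) P)
        {x : Fin (n + 1) → ℝ | (Finset.univ.filter fun i => x i < x j).card < k}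
        = (Measure.map (fun ω => fun i => S i ω) P)
        {x : Fin (n + 1) → ℝ | (Finset.univ.filter fun i => x i < x j).card < k} := by
      rw [hexch]
    rw [Measure.map_apply hσmeas (hA j), Measure.map_apply hT (hA j)] at h1
    have hpre1 : (fun ω => fun i => S (σ i) ω) ⁻¹'
        {x : Fin (n + 1) → ℝ | (Finset.univ.filter fun i => x i < x j).card < k}
        = E (Fin.last n) := by
      ext ω
      simp only [Set.mem_preimage, Set.mem_setOf_eq, hE, hN]
      rw [card_filter_perm σ (fun i => S i ω < S (σ j) ω), hσ, Equiv.swap_apply_left]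
    have hpre2 : (fun ω => fun i => S i ω) ⁻¹'
        {x : Fin (n + 1) → ℝ | (Finset.univ.filter fun i => x i < x j).card < k}
        = E j := rfl
    rw [hpre1, hpre2] at h1
    exact h1.symm
  -- lower bound the sum of probabilities
  have hsum : (k : ℝ≥0∞) ≤ ∑ j : Fin (n + 1), P (E j) := by
    have hind : ∀ j : Fin (n + 1),
        Measurable ((E j).indicator (fun _ => (1 : ℝ≥0∞))) := fun j =>
      measurable_const.indicator (hEmeas j)
    calc (k : ℝ≥0∞) = ∫⁻ _, (k : ℝ≥0∞) ∂P := by simp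
      _ ≤ ∫⁻ ω, ∑ j : Fin (n + 1), (E j).indicator (fun _ => (1 : ℝ≥0∞)) ω ∂P := by
          apply lintegral_mono
          intro ω
          have hcount := card_rank_lt hkn (fun i => S i ω)
          calc (k : ℝ≥0∞)
              ≤ ((Finset.univ.filter fun j => N j ω < k).card : ℝ≥0∞) := by
                exact_mod_cast hcount
            _ = ∑ j : Fin (n + 1), (E j).indicator (fun _ => (1 : ℝ≥0∞)) ω := by
                rw [Finset.card_filter]
                push_cast
                refine Finset.sum_congr rfl fun j _ => ?_
                simp [Set.indicator_apply, hE, hN, Set.mem_setOf_eq]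
      _ = ∑ j : Fin (n + 1), P (E j) := by
          rw [lintegral_finset_sum _ fun j _ => hind j]
          exact Finset.sum_congr rfl fun j _ => lintegral_indicator_one (hEmeas j)
  have htot : ∑ j : Fin (n + 1), P (E j) = (n + 1 : ℝ≥0∞) * P (E (Fin.last n)) := by
    rw [Finset.sum_congr rfl fun j _ => hPeq j, Finset.sum_const, Finset.card_univ,
      Fintype.card_fin, nsmul_eq_mul]
    push_cast
    ring
  have hmain : (k : ℝ≥0∞) ≤ (n + 1 : ℝ≥0∞) * P (E (Fin.last n)) := htot ▸ hsum
  have h2 : ENNReal.ofReal (1 - ε) * (n + 1 : ℝ≥0∞) ≤ (k : ℝ≥0∞) := by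
    have h3 : ENNReal.ofReal ((1 - ε) * (n + 1)) ≤ ENNReal.ofReal (k : ℝ) :=
      ENNReal.ofReal_le_ofReal hkr
    rw [ENNReal.ofReal_mul (by linarith : (0 : ℝ) ≤ 1 - ε)] at h3
    have h4 : ENNReal.ofReal ((n : ℝ) + 1) = (n + 1 : ℝ≥0∞) := by
      rw [ENNReal.ofReal_add (by positivity) zero_le_one]
      simp
    have h5 : ENNReal.ofReal (k : ℝ) = (k : ℝ≥0∞) := ENNReal.ofReal_natCast k
    rw [h4, h5] at h3
    exact h3
  have hne0 : (n + 1 : ℝ≥0∞) ≠ 0 := by simp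
  have hneT : (n + 1 : ℝ≥0∞) ≠ ⊤ := by simp
  calc ENNReal.ofReal (1 - ε) ≤ (k : ℝ≥0∞) / (n + 1 : ℝ≥0∞) := by
        rw [ENNReal.le_div_iff_mul_le (Or.inl hne0) (Or.inl hneT)]
        exact h2
    _ ≤ P (E (Fin.last n)) := by
        rw [ENNReal.div_le_iff_le_mul (Or.inl hne0) (Or.inl hneT)]
        exact hmain.trans_eq (mul_comm _ _)
end

section
/- Let S_1,…,S_n, S_{n+1} be exchangeable real-valued random variables with almost surely no ties (continuous joint distribution), and let Q = Quantile_{1−ε}({S_1,…,S_n} ∪ {∞}). Then P(S_{n+1} ≤ Q) = ⌈(1−ε)(n+1)⌉/(n+1) < 1 − ε + 1/(n+1). -/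
open MeasureTheory
open scoped ENNReal

lemma countP_ofFn_s4 {α : Type*} (N : ℕ) (f : Fin N → α) (p : α → Bool) :
    (List.ofFn f).countP p = (Finset.univ.filter (fun i => p (f i) = true)).card := by
  rw [List.ofFn_eq_map, List.countP_map, Fin.univ_def]
  simp only [Finset.filter, Finset.card, Multiset.filter_coe, Multiset.coe_card,
    List.countP_eq_length_filter]
  congr 1
  apply List.filter_congr
  intro x _
  simp

lemma card_filter_comp_equiv {N : ℕ} (σ : Equiv.Perm (Fin N)) (q : Fin N → Prop)
    [DecidablePred q] :
    (Finset.univ.filter (fun i => q (σ i))).card = (Finset.univ.filter q).card := by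
  apply Finset.card_equiv σ
  intro i
  simp

lemma le_get_sorted_iff {α : Type*} [LinearOrder α] (m : List α)
    (hs : m.Pairwise (· ≤ ·)) (a : α) (t : ℕ) (ht : t < m.length) :
    a ≤ m.get ⟨t, ht⟩ ↔ m.countP (fun e => decide (e < a)) ≤ t := by
  have hm : m = List.ofFn m.get := (List.ofFn_get m).symm
  have hc : m.countP (fun e => decide (e < a))
      = (Finset.univ.filter (fun i : Fin m.length => m.get i < a)).card := by
    conv_lhs => rw [hm]
    rw [countP_ofFn_s4]
    simp
  have hmono : ∀ i j : Fin m.length, i < j → m.get i ≤ m.get j := by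
    intro i j hij
    exact List.pairwise_iff_get.mp hs i j hij
  rw [hc]
  constructor
  · intro h
    have h1 : (Finset.univ.filter (fun i : Fin m.length => m.get i < a)).card
        ≤ (Finset.range t).card := by
      refine Finset.card_le_card_of_injOn (fun i => (i : ℕ)) ?_ ?_
      · intro i hi
        simp only [Finset.mem_coe, Finset.mem_filter, Finset.mem_univ, true_and] at hi
        simp only [Finset.mem_coe, Finset.mem_range]
        by_contra hle
        push_neg at hle
        rcases eq_or_lt_of_le hle with he | hlt
        · have he2 : m.get ⟨t, ht⟩ = m.get i := by congr 1; exact Fin.ext he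
          exact absurd (he2 ▸ h) (not_le.mpr hi)
        · exact absurd (le_trans h (hmono ⟨t, ht⟩ i hlt)) (not_le.mpr hi)
      · intro i _ j _ hij; exact Fin.ext hij
    simpa using h1
  · intro h
    by_contra hlt
    push_neg at hlt
    have hsub : ∀ j : ℕ, (hj : j ≤ t) →
        (⟨j, lt_of_le_of_lt hj ht⟩ : Fin m.length) ∈
          Finset.univ.filter (fun i : Fin m.length => m.get i < a) := by
      intro j hj
      simp only [Finset.mem_filter, Finset.mem_univ, true_and]
      rcases eq_or_lt_of_le hj with he | hlt'
      · have he2 : m.get ⟨j, lt_of_le_of_lt hj ht⟩ = m.get ⟨t, ht⟩ := by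
          congr 1; exact Fin.ext he
        exact he2 ▸ hlt
      · exact lt_of_le_of_lt (hmono _ ⟨t, ht⟩ hlt') hlt
    have h2 : (Finset.range (t + 1)).card
        ≤ (Finset.univ.filter (fun i : Fin m.length => m.get i < a)).card := by
      refine Finset.card_le_card_of_injOn
        (fun j => if hj : j < t + 1 then (⟨j, by omega⟩ : Fin m.length) else ⟨0, by omega⟩)
        ?_ ?_
      · intro j hj
        simp only [Finset.mem_coe, Finset.mem_range] at hj
        simp only [hj, dif_pos]
        exact hsub j (by omega)
      · intro i hi j hj hij
        simp only [Finset.coe_range, Set.mem_Iio] at hi hj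
        simp only [hi, hj, dif_pos] at hij
        have := congrArg Fin.val hij
        simpa using this
    rw [Finset.card_range] at h2
    omega


noncomputable def rankF (N : ℕ) (x : Fin N → ℝ) (j : Fin N) : ℕ :=
  (Finset.univ.filter fun i => x i ≤ x j).card

lemma rankF_comp_perm {N : ℕ} (σ : Equiv.Perm (Fin N)) (x : Fin N → ℝ) (j : Fin N) :
    rankF N (fun i => x (σ i)) j = rankF N x (σ j) := by
  unfold rankF
  exact card_filter_comp_equiv σ (fun i => x i ≤ x (σ j))

lemma rankF_pos {N : ℕ} (x : Fin N → ℝ) (j : Fin N) : 1 ≤ rankF N x j := by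
  rw [Nat.one_le_iff_ne_zero, ← Nat.pos_iff_ne_zero]
  apply Finset.card_pos.mpr
  exact ⟨j, by simp⟩

lemma rankF_le {N : ℕ} (x : Fin N → ℝ) (j : Fin N) : rankF N x j ≤ N := by
  calc rankF N x j ≤ (Finset.univ : Finset (Fin N)).card := Finset.card_le_card (Finset.filter_subset _ _)
  _ = N := by simp

lemma rankF_injective {N : ℕ} (x : Fin N → ℝ)
    (hd : ∀ i j : Fin N, i ≠ j → x i ≠ x j) : Function.Injective (rankF N x) := by
  intro j j' h
  by_contra hne
  wlog hle : x j ≤ x j' generalizing j j'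
  · exact this h.symm (Ne.symm hne) (le_of_not_ge hle)
  have hsub : (Finset.univ.filter fun i => x i ≤ x j)
      ⊆ (Finset.univ.filter fun i => x i ≤ x j') := by
    intro i hi
    simp only [Finset.mem_filter, Finset.mem_univ, true_and] at hi ⊢
    exact le_trans hi hle
  have heq : (Finset.univ.filter fun i => x i ≤ x j)
      = (Finset.univ.filter fun i => x i ≤ x j') :=
    Finset.eq_of_subset_of_card_le hsub (le_of_eq h.symm)
  have : j' ∈ (Finset.univ.filter fun i => x i ≤ x j) := by
    rw [heq]; simp
  simp only [Finset.mem_filter, Finset.mem_univ, true_and] at this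
  exact hd j j' hne (le_antisymm hle this)

lemma card_rankF_le {N : ℕ} (x : Fin N → ℝ)
    (hd : ∀ i j : Fin N, i ≠ j → x i ≠ x j) (k : ℕ) (hk : k ≤ N) :
    (Finset.univ.filter fun j => rankF N x j ≤ k).card = k := by
  have hinj := rankF_injective x hd
  have himg : Finset.univ.image (rankF N x) = Finset.Icc 1 N := by
    apply Finset.eq_of_subset_of_card_le
    · intro r hr
      simp only [Finset.mem_image, Finset.mem_univ, true_and] at hr
      obtain ⟨j, rfl⟩ := hr
      exact Finset.mem_Icc.mpr ⟨rankF_pos x j, rankF_le x j⟩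
    · rw [Finset.card_image_of_injective _ hinj]
      simp [Nat.card_Icc]
  have h1 : (Finset.univ.filter fun j => rankF N x j ≤ k).card
      = ((Finset.univ.filter fun j => rankF N x j ≤ k).image (rankF N x)).card :=
    (Finset.card_image_of_injective _ hinj).symm
  rw [h1]
  have h2 : (Finset.univ.filter fun j => rankF N x j ≤ k).image (rankF N x)
      = (Finset.univ.image (rankF N x)).filter (fun r => r ≤ k) := by
    ext r
    simp only [Finset.mem_image, Finset.mem_filter, Finset.mem_univ, true_and]
    constructor
    · rintro ⟨j, hj, rfl⟩; exact ⟨⟨j, rfl⟩, hj⟩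
    · rintro ⟨⟨j, rfl⟩, hj⟩; exact ⟨j, hj, rfl⟩
  rw [h2, himg]
  have h3 : (Finset.Icc 1 N).filter (fun r => r ≤ k) = Finset.Icc 1 k := by
    ext r
    simp only [Finset.mem_filter, Finset.mem_Icc]
    omega
  rw [h3, Nat.card_Icc]
  omega

lemma claimA (n k : ℕ) (hk1 : 1 ≤ k) (hk2 : k ≤ n + 1) (x : Fin (n + 1) → ℝ)
    (hd : ∀ i j : Fin (n + 1), i ≠ j → x i ≠ x j) :
    ((x (Fin.last n) : EReal) ≤
        orderStat ((List.ofFn fun i : Fin n => ((x i.castSucc : ℝ) : EReal)) ++ [⊤]) k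
      ↔ rankF (n + 1) x (Fin.last n) ≤ k) := by
  set a : EReal := (x (Fin.last n) : EReal) with ha
  set l : List EReal := (List.ofFn fun i : Fin n => ((x i.castSucc : ℝ) : EReal)) ++ [⊤] with hl
  set m : List EReal := l.mergeSort (fun a b => decide (a ≤ b)) with hm
  have hlenl : l.length = n + 1 := by simp [hl]
  have hlen : m.length = n + 1 := by rw [hm, List.length_mergeSort, hlenl]
  have hkm : k - 1 < m.length := by omega
  have hsort : m.Pairwise (· ≤ ·) := by
    have := List.pairwise_mergeSort (le := fun a b : EReal => decide (a ≤ b))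
      (fun a b c hab hbc => by simp only [decide_eq_true_eq] at *; exact le_trans hab hbc)
      (fun a b => by simpa using le_total a b) l
    exact this.imp (fun h => by simpa using h)
  have hOS : orderStat l k = m.get ⟨k - 1, hkm⟩ := by
    rw [orderStat, ← hm]
    rw [List.getD_eq_getElem?_getD, List.getElem?_eq_getElem hkm]; rfl
  rw [hOS, le_get_sorted_iff m hsort a (k - 1) hkm]
  have hcount : m.countP (fun e => decide (e < a))
      = (Finset.univ.filter fun i : Fin n => x i.castSucc < x (Fin.last n)).card := by
    rw [List.Perm.countP_eq _ (List.mergeSort_perm l _), hl, List.countP_append,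
      countP_ofFn_s4]
    have h1 : List.countP (fun e => decide (e < a)) [⊤] = 0 := by
      simp [ha]
    rw [h1, add_zero]
    congr 1
    apply Finset.filter_congr
    intro i _
    simp [ha, EReal.coe_lt_coe_iff]
  have hrank : rankF (n + 1) x (Fin.last n)
      = (Finset.univ.filter fun i : Fin n => x i.castSucc < x (Fin.last n)).card + 1 := by
    rw [rankF, Finset.card_filter, Finset.card_filter, Fin.sum_univ_castSucc]
    simp only [le_refl, if_true]
    congr 1
    apply Finset.sum_congr rfl
    intro i _
    have hne : x i.castSucc ≠ x (Fin.last n) :=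
      hd _ _ (Fin.ne_of_lt (Fin.castSucc_lt_last i))
    by_cases hlt : x i.castSucc < x (Fin.last n)
    · simp [hlt, le_of_lt hlt]
    · simp only [hlt, if_false]
      rw [if_neg]
      intro hle
      exact hlt (lt_of_le_of_ne hle hne)
  rw [hcount, hrank]
  omega

lemma measurable_rankF {N : ℕ} (j : Fin N) :
    Measurable (fun x : Fin N → ℝ => rankF N x j) := by
  unfold rankF
  simp_rw [Finset.card_filter]
  exact Finset.measurable_sum _ (fun i _ => Measurable.ite
    (measurableSet_le (measurable_pi_apply i) (measurable_pi_apply j))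
    measurable_const measurable_const)

/-- Exact conformal coverage under no ties: if `S 0, …, S n` are exchangeable
with almost surely no ties and `Q` is the `⌈(1−ε)(n+1)⌉`-th smallest value of
the first `n` scores augmented with `∞`, then
`P(S_{n+1} ≤ Q) = ⌈(1−ε)(n+1)⌉/(n+1) < 1 − ε + 1/(n+1)`. -/
theorem conformal_quantile_exact_coverage
    {Ω : Type*} [MeasurableSpace Ω] (P : Measure Ω) [IsProbabilityMeasure P]
    (n : ℕ) (S : Fin (n + 1) → Ω → ℝ) (hmeas : ∀ i, Measurable (S i))
    (hexch : ∀ σ : Equiv.Perm (Fin (n + 1)),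
      Measure.map (fun ω => fun i => S (σ i) ω) P
        = Measure.map (fun ω => fun i => S i ω) P)
    (hties : P {ω | ∃ i j : Fin (n + 1), i ≠ j ∧ S i ω = S j ω} = 0)
    (ε : ℝ) (hε0 : 0 < ε) (hε1 : ε < 1) :
    P {ω | (S (Fin.last n) ω : EReal) ≤
        orderStat
          ((List.ofFn fun i : Fin n => ((S i.castSucc ω : ℝ) : EReal)) ++ [⊤])
          (⌈(1 - ε) * (n + 1)⌉.toNat)}
      = ENNReal.ofReal ((⌈(1 - ε) * (n + 1)⌉.toNat : ℝ) / (n + 1)) ∧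
    ((⌈(1 - ε) * (n + 1)⌉.toNat : ℝ) / (n + 1)) < 1 - ε + 1 / (n + 1) := by
  have hx : (0:ℝ) < (1 - ε) * (n + 1) := by
    apply _root_.mul_pos (by linarith) (by positivity)
  have hc0 : 0 < ⌈(1 - ε) * ((n : ℝ) + 1)⌉ := Int.ceil_pos.mpr (by exact_mod_cast hx)
  set k : ℕ := ⌈(1 - ε) * ((n : ℝ) + 1)⌉.toNat with hkdef
  have hk1 : 1 ≤ k := by omega
  have hkc : (k : ℝ) = ((⌈(1 - ε) * ((n : ℝ) + 1)⌉ : ℤ) : ℝ) := by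
    rw [hkdef]; exact_mod_cast congrArg Int.cast (Int.toNat_of_nonneg hc0.le)
  have hk2 : k ≤ n + 1 := by
    have h2 : ⌈(1 - ε) * ((n : ℝ) + 1)⌉ ≤ ((n : ℤ) + 1) := by
      apply Int.ceil_le.mpr
      push_cast
      nlinarith [hε0.le, (by positivity : (0:ℝ) ≤ (n:ℝ) + 1)]
    omega
  have hnpos : (0:ℝ) < (n : ℝ) + 1 := by positivity
  -- arithmetic conclusion
  have harith : ((k : ℝ)) / (n + 1) < 1 - ε + 1 / (n + 1) := by
    have h1 : (k : ℝ) < (1 - ε) * ((n : ℝ) + 1) + 1 := by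
      rw [hkc]; exact Int.ceil_lt_add_one _
    rw [div_lt_iff₀ hnpos]
    have he : (1 - ε + 1 / ((n : ℝ) + 1)) * ((n : ℝ) + 1) = (1 - ε) * ((n : ℝ) + 1) + 1 := by
      field_simp
    rw [he]; exact h1
  refine ⟨?_, harith⟩
  -- probabilistic part
  set G : Ω → (Fin (n + 1) → ℝ) := fun ω i => S i ω with hGdef
  have hG : Measurable G := measurable_pi_lambda _ hmeas
  have hT : ∀ᵐ ω ∂P, ω ∉ {ω | ∃ i j : Fin (n + 1), i ≠ j ∧ S i ω = S j ω} :=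
    measure_eq_zero_iff_ae_notMem.mp hties
  have hdist : ∀ᵐ ω ∂P, ∀ i j : Fin (n + 1), i ≠ j → S i ω ≠ S j ω := by
    filter_upwards [hT] with ω hω
    intro i j hij heq
    exact hω ⟨i, j, hij, heq⟩
  set B : Fin (n + 1) → Set (Fin (n + 1) → ℝ) :=
    fun j => {x | rankF (n + 1) x j ≤ k} with hBdef
  have hB : ∀ j, MeasurableSet (B j) := fun j =>
    measurable_rankF j measurableSet_Iic
  -- step 1 : target set is a.e. equal to G ⁻¹' B (last)
  have hstep1 : P {ω | (S (Fin.last n) ω : EReal) ≤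
      orderStat ((List.ofFn fun i : Fin n => ((S i.castSucc ω : ℝ) : EReal)) ++ [⊤]) k}
      = P (G ⁻¹' B (Fin.last n)) := by
    apply measure_congr
    rw [Filter.eventuallyEq_set]
    filter_upwards [hdist] with ω hω
    simpa [hBdef, hGdef] using claimA n k hk1 hk2 (G ω) hω
  rw [hstep1]
  -- step 2 : exchangeability
  have hstep2 : ∀ j, P (G ⁻¹' B j) = P (G ⁻¹' B (Fin.last n)) := by
    intro j
    set σ := Equiv.swap j (Fin.last n) with hσ
    have hGσ : Measurable (fun ω => fun i => S (σ i) ω) :=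
      measurable_pi_lambda _ (fun i => hmeas (σ i))
    have hpre : G ⁻¹' B j = (fun ω => fun i => S (σ i) ω) ⁻¹' B (Fin.last n) := by
      ext ω
      simp only [Set.mem_preimage, hBdef, Set.mem_setOf_eq]
      rw [show (fun i => S (σ i) ω) = (fun i => G ω (σ i)) from rfl,
        rankF_comp_perm σ (G ω) (Fin.last n), hσ, Equiv.swap_apply_right]
    rw [hpre, ← Measure.map_apply hGσ (hB _), hexch σ, Measure.map_apply hG (hB _)]
  -- step 3 : sum over j
  have hstep3 : ∑ j : Fin (n + 1), P (G ⁻¹' B j) = (k : ℝ≥0∞) := by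
    have h1 : ∀ j : Fin (n + 1), P (G ⁻¹' B j)
        = ∫⁻ ω, Set.indicator (G ⁻¹' B j) (fun _ => (1:ℝ≥0∞)) ω ∂P := by
      intro j
      rw [show (fun _ : Ω => (1:ℝ≥0∞)) = (1 : Ω → ℝ≥0∞) from rfl,
        lintegral_indicator_one (hG (hB j))]
    simp_rw [h1]
    rw [← lintegral_finset_sum _ (fun j _ =>
      (measurable_const.indicator (hG (hB j))))]
    have h2 : ∫⁻ ω, ∑ j : Fin (n + 1),
        Set.indicator (G ⁻¹' B j) (fun _ => (1:ℝ≥0∞)) ω ∂P = ∫⁻ _, (k : ℝ≥0∞) ∂P := by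
      apply lintegral_congr_ae
      filter_upwards [hdist] with ω hω
      have h3 : ∀ j : Fin (n + 1), Set.indicator (G ⁻¹' B j) (fun _ => (1:ℝ≥0∞)) ω
          = if rankF (n + 1) (G ω) j ≤ k then (1:ℝ≥0∞) else 0 := by
        intro j
        by_cases hm : rankF (n + 1) (G ω) j ≤ k
        · rw [if_pos hm, Set.indicator_of_mem (by exact hm)]
        · rw [if_neg hm, Set.indicator_of_notMem (by exact hm)]
      simp_rw [h3]
      have h4 : ∑ j : Fin (n + 1), (if rankF (n + 1) (G ω) j ≤ k then (1:ℝ≥0∞) else 0)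
          = ((Finset.univ.filter fun j => rankF (n + 1) (G ω) j ≤ k).card : ℝ≥0∞) := by
        rw [Finset.card_filter]
        push_cast
        rfl
      rw [h4, card_rankF_le (G ω) hω k hk2]
    rw [h2, lintegral_const, measure_univ, mul_one]
  -- combine
  have hcomb : ((n : ℝ≥0∞) + 1) * P (G ⁻¹' B (Fin.last n)) = (k : ℝ≥0∞) := by
    rw [← hstep3]
    rw [Finset.sum_congr rfl (fun j _ => hstep2 j), Finset.sum_const, Finset.card_univ,
      Fintype.card_fin, nsmul_eq_mul]
    push_cast
    ring
  have hfin : P (G ⁻¹' B (Fin.last n)) = (k : ℝ≥0∞) / ((n : ℝ≥0∞) + 1) := by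
    rw [ENNReal.eq_div_iff (by simp) (by simp [ENNReal.add_ne_top])]
    exact hcomb
  rw [hfin]
  rw [ENNReal.ofReal_div_of_pos hnpos]
  congr 1
  · rw [ENNReal.ofReal_natCast]
  · rw [show ((n : ℝ) + 1) = ((n + 1 : ℕ) : ℝ) by push_cast; ring, ENNReal.ofReal_natCast]
    push_cast
    ring
end

section
/- Let (b_t) satisfy b_{t+1} = b_t + η(1{s_t > b_t} − ε) with η > 0, ε ∈ (0,1), s_t ∈ [0,1], b_1 ∈ [0,1]. Then for all T ≥ 1, Σ_{t=1}^T 1{s_t > b_t} ≤ εT + (1 + η(1−ε))/η and Σ_{t=1}^T 1{s_t > b_t} ≥ εT − (1 + ηε)/η. -/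
/-- Finite-sample online guarantee when every step updates the threshold:
with `b (t+1) = b t + η (1{s t > b t} − ε)`, `η > 0`, `ε ∈ (0,1)`, scores in
`[0,1]` and `b 1 ∈ [0,1]`, for every `T ≥ 1` the number of errors satisfies
`εT − (1 + ηε)/η ≤ Σ_{t=1}^T 1{s t > b t} ≤ εT + (1 + η(1−ε))/η`. -/
theorem online_every_step_bounds (η ε : ℝ) (b s : ℕ → ℝ)
    (hη : 0 < η) (hε0 : 0 < ε) (hε1 : ε < 1)
    (hs : ∀ t, s t ∈ Set.Icc (0:ℝ) 1)
    (hb1 : b 1 ∈ Set.Icc (0:ℝ) 1)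
    (hupd : ∀ t ≥ 1, b (t + 1) = b t + η * ((if s t > b t then (1:ℝ) else 0) - ε)) :
    ∀ T : ℕ, 1 ≤ T →
      (∑ t ∈ Finset.Icc 1 T, (if s t > b t then (1:ℝ) else 0))
          ≤ ε * T + (1 + η * (1 - ε)) / η ∧
      ε * T - (1 + η * ε) / η
          ≤ ∑ t ∈ Finset.Icc 1 T, (if s t > b t then (1:ℝ) else 0) := by
  -- boundedness of b
  have hbound : ∀ t, 1 ≤ t → -(η * ε) ≤ b t ∧ b t ≤ 1 + η * (1 - ε) := by
    intro t ht
    induction t with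
    | zero => omega
    | succ n ih =>
      rcases Nat.eq_or_lt_of_le ht with h | h
      · have h1 : n + 1 = 1 := h.symm
        rw [h1]
        constructor
        · nlinarith [hb1.1, mul_pos hη hε0]
        · nlinarith [hb1.2, mul_pos hη (sub_pos.mpr hε1)]
      · have hn : 1 ≤ n := by omega
        obtain ⟨ihl, ihr⟩ := ih hn
        have h := hupd n hn
        by_cases hc : s n > b n
        · rw [if_pos hc] at h
          constructor
          · nlinarith
          · have := (hs n).2
            nlinarith
        · rw [if_neg hc] at h
          push_neg at hc
          have := (hs n).1
          constructor
          · nlinarith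
          · nlinarith
  -- telescoping
  have htel : ∀ T : ℕ, b (T + 1) = b 1 +
      η * ((∑ t ∈ Finset.Icc 1 T, (if s t > b t then (1:ℝ) else 0)) - ε * T) := by
    intro T
    induction T with
    | zero => simp
    | succ n ih =>
      rw [Finset.sum_Icc_succ_top (by omega : 1 ≤ n + 1), hupd (n + 1) (by omega), ih]
      push_cast
      ring
  intro T hT
  have h1 := htel T
  obtain ⟨hl, hr⟩ := hbound (T + 1) (by omega)
  have hS : (∑ t ∈ Finset.Icc 1 T, (if s t > b t then (1:ℝ) else 0))
      = ε * T + (b (T + 1) - b 1) / η := by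
    field_simp at h1 ⊢
    linarith
  rw [hS]
  constructor
  · have h2 : (b (T + 1) - b 1) / η ≤ (1 + η * (1 - ε)) / η := by
      gcongr
      linarith [hb1.1]
    linarith
  · have h2 : (-(1 + η * ε)) / η ≤ (b (T + 1) - b 1) / η := by
      gcongr
      linarith [hb1.2]
    have h3 : (-(1 + η * ε)) / η = -((1 + η * ε) / η) := by ring
    linarith [h3 ▸ h2]
end
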